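/- Let G be an abelian group and UT_n carry the elementary G-grading given by γ = (h₁,…,h_n) with deg e_{ij} = h_i h_j⁻¹. Then UT_n admits a degree-inverting involution if and only if h₁h_n⁻¹ = h₂h_{n−1}⁻¹ = ⋯ = h_n h₁⁻¹. -/

import Mathlib

set_option synthInstance.maxHeartbeats 400000

open Matrix

/-- The algebra `UT_n` of upper triangular `n × n` matrices over `F`. -/
def UTn (n : ℕ) (F : Type*) [Field F] : Subalgebra F (Matrix (Fin n) (Fin n) F) where
  carrier := {M | M.BlockTriangular id}
  mul_mem' := fun ha hb => ha.mul hb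
  one_mem' := Matrix.blockTriangular_one
  add_mem' := fun ha hb => ha.add hb
  zero_mem' := Matrix.blockTriangular_zero
  algebraMap_mem' := fun r => by
    simpa [Matrix.algebraMap_eq_diagonal] using
      Matrix.blockTriangular_diagonal (b := id) (algebraMap F (Fin n → F) r)

/-- The homogeneous component of degree `g` of `UT_n` for the elementary grading given by
`γ = (h₁,…,h_n)`, `deg e_{ij} = h_i h_j⁻¹` (`0`-based indexing): those upper triangular
matrices all of whose nonzero entries sit in positions of degree `g`. -/
def utComponent' {G : Type*} [CommGroup G] (n : ℕ) {F : Type*} [Field F]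
    (γ : ℕ → G) (g : G) : Set (UTn n F) :=
  {M | ∀ i j : Fin n, (M : Matrix (Fin n) (Fin n) F) i j ≠ 0 → γ i * (γ j)⁻¹ = g}

namespace UTnAux

variable {F : Type*} [Field F] {n : ℕ}

/-- Matrices supported on or above the `m`-th superdiagonal. -/
def Pset (n : ℕ) (F : Type*) [Field F] (m : ℕ) : Set (Matrix (Fin n) (Fin n) F) :=
  {A | ∀ a b : Fin n, A a b ≠ 0 → (a : ℕ) + m ≤ (b : ℕ)}

lemma Pset_mul {m₁ m₂ : ℕ} {A B : Matrix (Fin n) (Fin n) F}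
    (hA : A ∈ Pset n F m₁) (hB : B ∈ Pset n F m₂) : A * B ∈ Pset n F (m₁ + m₂) := by
  intro a b hab
  rw [Matrix.mul_apply] at hab
  obtain ⟨k, -, hk⟩ := Finset.exists_ne_zero_of_sum_ne_zero hab
  have h1 : A a k ≠ 0 := fun h => hk (by simp [h])
  have h2 : B k b ≠ 0 := fun h => hk (by simp [h])
  have := hA a k h1
  have := hB k b h2
  omega

lemma coe_upper (x : UTn n F) {a b : Fin n} (h : (b : ℕ) < (a : ℕ)) :
    (x : Matrix (Fin n) (Fin n) F) a b = 0 :=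
  x.2 (show (id b : Fin n) < id a from h)

lemma coe_pow_upper (x : UTn n F) (k : ℕ) {a b : Fin n} (h : (b : ℕ) < (a : ℕ)) :
    ((x : Matrix (Fin n) (Fin n) F) ^ k) a b = 0 := by
  have := (x ^ k).2 (show (id b : Fin n) < id a from h)
  rwa [SubmonoidClass.coe_pow] at this

lemma pow_diag (x : UTn n F) (k : ℕ) (a : Fin n) :
    ((x : Matrix (Fin n) (Fin n) F) ^ k) a a = ((x : Matrix (Fin n) (Fin n) F) a a) ^ k := by
  induction k with
  | zero => simp [Matrix.one_apply]
  | succ k ih =>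
    rw [pow_succ, pow_succ, Matrix.mul_apply, ← ih, Finset.sum_eq_single a]
    · intro c _ hc
      rcases lt_or_gt_of_ne (fun h => hc (Fin.ext h) : (c : ℕ) ≠ (a : ℕ)) with h | h
      · rw [coe_pow_upper x k h, zero_mul]
      · rw [coe_upper x h, mul_zero]
    · intro h; exact absurd (Finset.mem_univ a) h

/-- A degree-reversing linear anti-homomorphism maps strictly upper triangular matrices
to strictly upper triangular matrices. -/
lemma rho_strict (ρ : (UTn n F) ≃ₗ[F] (UTn n F))
    (hmul : ∀ x y : UTn n F, ρ (x * y) = ρ y * ρ x)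
    (x : UTn n F) (hx : (x : Matrix (Fin n) (Fin n) F) ∈ Pset n F 1) :
    ((ρ x : UTn n F) : Matrix (Fin n) (Fin n) F) ∈ Pset n F 1 := by
  rcases Nat.eq_zero_or_pos n with h0 | hn
  · subst h0; intro a; exact a.elim0
  -- x ^ n = 0
  have hxpow : ∀ m : ℕ, (x : Matrix (Fin n) (Fin n) F) ^ (m + 1) ∈ Pset n F (m + 1) := by
    intro m
    induction m with
    | zero => simpa using hx
    | succ m ih => rw [pow_succ]; exact Pset_mul ih hx
  have hxn : x ^ n = 0 := by
    apply Subtype.ext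
    rw [SubmonoidClass.coe_pow]
    ext a b
    by_contra hab
    rw [ZeroMemClass.coe_zero, Matrix.zero_apply] at hab
    obtain ⟨m, rfl⟩ : ∃ m, n = m + 1 := ⟨n - 1, by omega⟩
    have := hxpow m a b hab
    omega
  -- ρ commutes with powers
  have hpow : ∀ m : ℕ, ρ (x ^ (m + 1)) = (ρ x) ^ (m + 1) := by
    intro m
    induction m with
    | zero => simp
    | succ m ih =>
      rw [pow_succ, hmul, ih, ← pow_succ']
  have hrxn : (ρ x) ^ n = 0 := by
    obtain ⟨m, rfl⟩ : ∃ m, n = m + 1 := ⟨n - 1, by omega⟩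
    rw [← hpow m, hxn, map_zero]
  -- diagonal entries of ρ x vanish
  have hdiag : ∀ a : Fin n, ((ρ x : UTn n F) : Matrix (Fin n) (Fin n) F) a a = 0 := by
    intro a
    have h1 : (((ρ x : UTn n F) : Matrix (Fin n) (Fin n) F) a a) ^ n = 0 := by
      rw [← pow_diag (ρ x) n a]
      have : ((ρ x : UTn n F) : Matrix (Fin n) (Fin n) F) ^ n =
          (((ρ x) ^ n : UTn n F) : Matrix (Fin n) (Fin n) F) := by
        rw [SubmonoidClass.coe_pow]
      rw [this, hrxn, ZeroMemClass.coe_zero, Matrix.zero_apply]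
    exact (pow_eq_zero_iff (by omega : n ≠ 0)).mp h1
  intro a b hab
  have hne : (a : ℕ) ≠ (b : ℕ) := fun h => hab (Fin.ext h ▸ hdiag a)
  have hnb : ¬ ((b : ℕ) < (a : ℕ)) := fun h => hab (coe_upper (ρ x) h)
  omega

/-- The matrix unit `e_{ij}` as an element of `UT_n`. -/
def utUnit (i j : Fin n) (_ : i ≤ j) : UTn n F :=
  ⟨Matrix.single i j 1, by
    intro a b hb
    apply Matrix.single_apply_of_ne
    rintro ⟨rfl, rfl⟩
    exact absurd hb (not_lt.mpr ‹i ≤ j›)⟩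

lemma utUnit_coe (i j : Fin n) (h : i ≤ j) :
    ((utUnit i j h : UTn n F) : Matrix (Fin n) (Fin n) F) = Matrix.single i j 1 := rfl

lemma utUnit_mul {i j k : Fin n} (h1 : i ≤ j) (h2 : j ≤ k) :
    (utUnit i j h1 : UTn n F) * utUnit j k h2 = utUnit i k (h1.trans h2) := by
  apply Subtype.ext
  rw [MulMemClass.coe_mul, utUnit_coe, utUnit_coe, utUnit_coe,
    Matrix.single_mul_single_same, one_mul]

lemma utUnit_pset {i j : Fin n} (h : i ≤ j) {m : ℕ} (hm : (i : ℕ) + m ≤ (j : ℕ)) :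
    ((utUnit i j h : UTn n F) : Matrix (Fin n) (Fin n) F) ∈ Pset n F m := by
  intro a b hab
  rw [utUnit_coe] at hab
  by_contra hc
  exact hab (Matrix.single_apply_of_ne _ _ _ _ _ (by rintro ⟨rfl, rfl⟩; omega))

lemma utUnit_ne_zero {i j : Fin n} (h : i ≤ j) : (utUnit i j h : UTn n F) ≠ 0 := by
  intro hz
  have : ((utUnit i j h : UTn n F) : Matrix (Fin n) (Fin n) F) i j = 0 := by
    rw [hz]; simp
  rw [utUnit_coe, Matrix.single_apply_same] at this
  exact one_ne_zero this

/-- `ρ` maps `e_{ij}` into the span of the `d`-th and higher superdiagonals, `d = j - i`. -/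
lemma rho_unit (ρ : (UTn n F) ≃ₗ[F] (UTn n F))
    (hmul : ∀ x y : UTn n F, ρ (x * y) = ρ y * ρ x) :
    ∀ (d : ℕ) (i j : Fin n) (h : i ≤ j), (j : ℕ) = (i : ℕ) + d →
      ((ρ (utUnit i j h) : UTn n F) : Matrix (Fin n) (Fin n) F) ∈ Pset n F d := by
  intro d
  induction d with
  | zero =>
    intro i j h hd a b hab
    have hnb : ¬ ((b : ℕ) < (a : ℕ)) := fun hlt => hab (coe_upper _ hlt)
    omega
  | succ d ih =>
    intro i j h hd
    have hkn : (i : ℕ) + d < n := by have := j.isLt; omega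
    set k : Fin n := ⟨(i : ℕ) + d, hkn⟩ with hk
    have h1 : i ≤ k := by simp [Fin.le_def, hk]
    have h2 : k ≤ j := by simp [Fin.le_def, hk]; omega
    have heq : (utUnit i j h : UTn n F) = utUnit i k h1 * utUnit k j h2 := by
      rw [utUnit_mul]
    rw [heq, hmul, MulMemClass.coe_mul]
    have hA : ((ρ (utUnit k j h2) : UTn n F) : Matrix (Fin n) (Fin n) F) ∈ Pset n F 1 :=
      rho_strict ρ hmul _ (utUnit_pset h2 (by simp [hk]; omega))
    have hB : ((ρ (utUnit i k h1) : UTn n F) : Matrix (Fin n) (Fin n) F) ∈ Pset n F d :=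
      ih i k h1 (by simp [hk])
    have := Pset_mul hA hB
    rwa [Nat.add_comm 1 d] at this

/-- The flip (transpose along the antidiagonal) on matrices. -/
def flipFun (M : Matrix (Fin n) (Fin n) F) : Matrix (Fin n) (Fin n) F :=
  Matrix.of fun i j => M j.rev i.rev

lemma flipFun_mem {M : Matrix (Fin n) (Fin n) F} (hM : M ∈ UTn n F) : flipFun M ∈ UTn n F :=
  fun a b hb => hM (show (id a.rev : Fin n) < id b.rev from Fin.rev_lt_rev.mpr hb)

/-- The flip as a linear equivalence of `UT_n`. -/
def utFlip (n : ℕ) (F : Type*) [Field F] : (UTn n F) ≃ₗ[F] (UTn n F) where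
  toFun x := ⟨flipFun (x : Matrix (Fin n) (Fin n) F), flipFun_mem x.2⟩
  map_add' x y := Subtype.ext (by ext a b; simp [flipFun])
  map_smul' c x := Subtype.ext (by ext a b; simp [flipFun])
  invFun x := ⟨flipFun (x : Matrix (Fin n) (Fin n) F), flipFun_mem x.2⟩
  left_inv x := Subtype.ext (by ext a b; simp [flipFun, Fin.rev_rev])
  right_inv x := Subtype.ext (by ext a b; simp [flipFun, Fin.rev_rev])

lemma utFlip_coe (x : UTn n F) :
    ((utFlip n F x : UTn n F) : Matrix (Fin n) (Fin n) F) =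
      flipFun (x : Matrix (Fin n) (Fin n) F) := rfl

lemma utFlip_mul (x y : UTn n F) : utFlip n F (x * y) = utFlip n F y * utFlip n F x := by
  apply Subtype.ext
  rw [MulMemClass.coe_mul, utFlip_coe, utFlip_coe, utFlip_coe, MulMemClass.coe_mul]
  ext a b
  simp only [flipFun, Matrix.of_apply, Matrix.mul_apply]
  refine Fintype.sum_equiv Fin.revPerm _ _ fun k => ?_
  simp [Fin.rev_rev, mul_comm]

lemma utFlip_invol (x : UTn n F) : utFlip n F (utFlip n F x) = x := by
  apply Subtype.ext
  rw [utFlip_coe, utFlip_coe]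
  ext a b
  simp [flipFun, Fin.rev_rev]

end UTnAux

open UTnAux in
/-- Let `G` be abelian and `UT_n` carry the elementary `G`-grading given by
`γ = (h₁,…,h_n)`, `deg e_{ij} = h_i h_j⁻¹`.  Then `UT_n` admits a degree-inverting
involution if and only if `h₁h_n⁻¹ = h₂h_{n−1}⁻¹ = ⋯ = h_n h₁⁻¹` (in `0`-based
indexing: `h_i h_{n−1−i}⁻¹` is the same for all `i < n`). -/
theorem UTn_exists_degInvInvolution_iff_abelian
    {F : Type*} [Field F] (hchar : (2 : F) ≠ 0)
    {G : Type*} [CommGroup G] (n : ℕ) (γ : ℕ → G) :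
    (∃ ρ : (UTn n F) ≃ₗ[F] (UTn n F),
        (∀ x y : UTn n F, ρ (x * y) = ρ y * ρ x) ∧
        (∀ x : UTn n F, ρ (ρ x) = x) ∧
        (∀ (g : G) (M : UTn n F), M ∈ utComponent' n γ g →
          ρ M ∈ utComponent' n γ g⁻¹)) ↔
    (∀ i j : ℕ, i < n → j < n →
      γ i * (γ (n - 1 - i))⁻¹ = γ j * (γ (n - 1 - j))⁻¹) := by
  constructor
  · rintro ⟨ρ, hmul, -, hdeg⟩
    have key : ∀ i : ℕ, i < n → γ i * (γ (n - 1 - i))⁻¹ = γ 0 * (γ (n - 1))⁻¹ := by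
      intro i hi
      have hn : 0 < n := Nat.pos_of_ne_zero (by omega)
      set z : Fin n := ⟨0, hn⟩ with hz
      set I : Fin n := ⟨i, hi⟩ with hI
      set Nf : Fin n := ⟨n - 1, by omega⟩ with hNf
      set K : Fin n := ⟨n - 1 - i, by omega⟩ with hK
      have hzI : z ≤ I := by simp [Fin.le_def, hz, hI]
      have hINf : I ≤ Nf := by simp [Fin.le_def, hI, hNf]; omega
      have hzNf : z ≤ Nf := hzI.trans hINf
      -- ρ(e_{0,N}) is supported on the (N)-th superdiagonal, i.e. on the corner entry
      have hcorner : ((ρ (utUnit z Nf hzNf) : UTn n F) : Matrix (Fin n) (Fin n) F)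
          ∈ Pset n F (n - 1) :=
        rho_unit ρ hmul (n - 1) z Nf hzNf (by simp [hz, hNf])
      -- the corner entry of ρ(e_{0,N}) is nonzero
      have hlam : ((ρ (utUnit z Nf hzNf) : UTn n F) : Matrix (Fin n) (Fin n) F) z Nf ≠ 0 := by
        intro h0
        have hzero : ρ (utUnit z Nf hzNf) = 0 := by
          apply Subtype.ext
          ext a b
          rw [ZeroMemClass.coe_zero, Matrix.zero_apply]
          by_contra hab
          have h1 := hcorner a b hab
          have h2 := b.isLt
          have ha0 : (a : ℕ) = 0 := by omega
          have hb0 : (b : ℕ) = n - 1 := by omega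
          have : a = z := Fin.ext (by simp [hz, ha0])
          have : b = Nf := Fin.ext (by simp [hNf, hb0])
          subst ‹a = z›; subst ‹b = Nf›
          exact hab h0
        have := ρ.injective (hzero.trans (map_zero ρ).symm)
        exact utUnit_ne_zero hzNf this
      -- decompose e_{0,N} = e_{0,i} * e_{i,N}
      have hsplit : ρ (utUnit z Nf hzNf) = ρ (utUnit I Nf hINf) * ρ (utUnit z I hzI) := by
        rw [← hmul, utUnit_mul]
      have hA : ((ρ (utUnit I Nf hINf) : UTn n F) : Matrix (Fin n) (Fin n) F)
          ∈ Pset n F (n - 1 - i) :=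
        rho_unit ρ hmul (n - 1 - i) I Nf hINf (by simp [hI, hNf]; omega)
      have hB : ((ρ (utUnit z I hzI) : UTn n F) : Matrix (Fin n) (Fin n) F)
          ∈ Pset n F i :=
        rho_unit ρ hmul i z I hzI (by simp [hz, hI])
      -- the (K, Nf) entry of ρ(e_{0,i}) is nonzero
      have hkey : ((ρ (utUnit z I hzI) : UTn n F) : Matrix (Fin n) (Fin n) F) K Nf ≠ 0 := by
        intro h0
        apply hlam
        rw [hsplit, MulMemClass.coe_mul, Matrix.mul_apply]
        apply Finset.sum_eq_zero
        intro k _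
        rcases eq_or_ne k K with rfl | hk
        · rw [h0, mul_zero]
        · by_contra hc
          have h1 : ((ρ (utUnit I Nf hINf) : UTn n F) : Matrix (Fin n) (Fin n) F) z k ≠ 0 :=
            fun h => hc (by rw [h, zero_mul])
          have h2 : ((ρ (utUnit z I hzI) : UTn n F) : Matrix (Fin n) (Fin n) F) k Nf ≠ 0 :=
            fun h => hc (by rw [h, mul_zero])
          have e1 := hA z k h1
          have e2 := hB k Nf h2
          exact hk (Fin.ext (by simp only [hz, hNf, hK] at e1 e2 ⊢; omega))
      -- extract the degree relation
      have hacomp : (utUnit z I hzI : UTn n F) ∈ utComponent' n γ (γ 0 * (γ i)⁻¹) := by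
        intro p q hpq
        rw [utUnit_coe] at hpq
        by_contra hc
        exact hpq (Matrix.single_apply_of_ne _ _ _ _ _ (by
          rintro ⟨rfl, rfl⟩
          exact hc (by simp [hz, hI])))
      have hrel := hdeg _ _ hacomp K Nf hkey
      simp only [hK, hNf] at hrel
      -- hrel : γ (n-1-i) * (γ (n-1))⁻¹ = (γ 0 * (γ i)⁻¹)⁻¹
      have hrel2 : γ (n - 1 - i) / γ (n - 1) = γ i / γ 0 := by
        rw [div_eq_mul_inv, div_eq_mul_inv, hrel, _root_.mul_inv_rev, inv_inv, mul_comm]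
      have hmm := div_eq_div_iff_mul_eq_mul.mp hrel2
      rw [← div_eq_mul_inv, ← div_eq_mul_inv, div_eq_div_iff_mul_eq_mul]
      exact hmm.symm.trans (mul_comm _ _)
    intro i j hi hj
    exact (key i hi).trans (key j hj).symm
  · intro hc
    refine ⟨utFlip n F, utFlip_mul, utFlip_invol, ?_⟩
    intro g M hM a b hab
    rw [utFlip_coe] at hab
    have hab' : (M : Matrix (Fin n) (Fin n) F) b.rev a.rev ≠ 0 := hab
    have hM' := hM b.rev a.rev hab'
    have hva : ((a.rev : Fin n) : ℕ) = n - 1 - (a : ℕ) := by rw [Fin.val_rev]; omega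
    have hvb : ((b.rev : Fin n) : ℕ) = n - 1 - (b : ℕ) := by rw [Fin.val_rev]; omega
    rw [hva, hvb] at hM'
    -- hM' : γ (n-1-b) * (γ (n-1-a))⁻¹ = g
    have h1 := hc (a : ℕ) (b : ℕ) a.isLt b.isLt
    have h1' : γ (a : ℕ) * γ (n - 1 - (b : ℕ)) = γ (b : ℕ) * γ (n - 1 - (a : ℕ)) := by
      have h2 : γ (a : ℕ) / γ (n - 1 - (a : ℕ)) = γ (b : ℕ) / γ (n - 1 - (b : ℕ)) := by
        rw [div_eq_mul_inv, div_eq_mul_inv]; exact h1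
      exact div_eq_div_iff_mul_eq_mul.mp h2
    rw [← hM', _root_.mul_inv_rev, inv_inv, ← div_eq_mul_inv, ← div_eq_mul_inv,
      div_eq_div_iff_mul_eq_mul, h1']
    exact mul_comm _ _
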